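/- Suppose for i = 1,...,N there exist κ > 0, P_{i1} > 0, P_{i2} > 0 satisfying the LMIs (ineq_perform1) [[Φ_i + H_{i1}ᵀH_{i1} + κ(m_i−ε)I, A_{i21}ᵀP_{i2} + H_{i1}ᵀH_{i2}],[P_{i2}A_{i21} + H_{i2}ᵀH_{i1}, P_{i2}A_{i22} + A_{i22}ᵀP_{i2} + H_{i2}ᵀH_{i2} − κεI]] < 0 where Φ_i = (A_{i11} − G_{i1}C_{i1})ᵀP_{i1} + P_{i1}(A_{i11} − G_{i1}C_{i1}), and ε > 0 satisfies Tᵀ(ℒ ⊗ I_n)T + M > εI. Then the block-diagonal matrix P = blockdiag(T_i diag(P_{i1}, P_{i2}) T_iᵀ) > 0 satisfies ĀᵀP + PĀ − (Lᵀ⊗I_n)F̄ᵀP − PF̄(L⊗I_n) + I_N ⊗ HᵀH < 0, where Ā = blockdiag(A − G_iC_i), F_i = κθ_i T_i diag(P_{i1}^{−1}, P_{i2}^{−1}) T_iᵀ, G_i = T_i (G_{i1}ᵀ 0)ᵀ, F̄ = blockdiag(F_i). -/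

import Mathlib

open Matrix Kronecker

def NegDef {m : Type*} [Fintype m] (M : Matrix m m ℝ) : Prop := (-M).PosDef

def IsLaplacianOfStronglyConnectedDigraph {N : ℕ} (L : Matrix (Fin N) (Fin N) ℝ) : Prop :=
  ∃ Adj : Matrix (Fin N) (Fin N) ℝ,
    (∀ i j, 0 ≤ Adj i j) ∧ (∀ i, Adj i i = 0) ∧
    (∀ i j : Fin N, i ≠ j → Relation.TransGen (fun a b => Adj b a ≠ 0) i j) ∧
    L = Matrix.diagonal (fun i => ∑ j, Adj i j) - Adj

def blockDiag {N n : ℕ} (f : Fin N → Matrix (Fin n) (Fin n) ℝ) :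
    Matrix (Fin N × Fin n) (Fin N × Fin n) ℝ :=
  fun p q => if p.1 = q.1 then f p.1 p.2 q.2 else 0

/-- The index equivalence `Fin n ≃ Fin v ⊕ Fin (n - v)` splitting the first `v` coordinates. -/
def decompEquiv (v n : ℕ) (h : v ≤ n) : Fin n ≃ Fin v ⊕ Fin (n - v) :=
  (finCongr (Nat.add_sub_cancel' h).symm).trans finSumFinEquiv.symm

section bd
variable {N n : ℕ} (f g : Fin N → Matrix (Fin n) (Fin n) ℝ)

lemma bd_apply (p q : Fin N × Fin n) :
    _root_.blockDiag f p q = if p.1 = q.1 then f p.1 p.2 q.2 else 0 := rfl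

lemma bd_mul : _root_.blockDiag f * _root_.blockDiag g = _root_.blockDiag (fun i => f i * g i) := by
  ext ⟨i, a⟩ ⟨j, b⟩
  simp only [Matrix.mul_apply, bd_apply, Fintype.sum_prod_type]
  by_cases h : i = j
  · subst h
    simp [Finset.sum_ite_eq, Matrix.mul_apply]
  · simp only [if_neg h]
    refine Finset.sum_eq_zero fun k _ => Finset.sum_eq_zero fun c _ => ?_
    by_cases hik : i = k
    · subst hik; simp [h]
    · simp [hik]

lemma bd_transpose : (_root_.blockDiag f)ᵀ = _root_.blockDiag (fun i => (f i)ᵀ) := by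
  ext ⟨i, a⟩ ⟨j, b⟩
  simp only [Matrix.transpose_apply, bd_apply]
  by_cases h : i = j
  · subst h; simp
  · simp [h, Ne.symm h]

lemma bd_add : _root_.blockDiag f + _root_.blockDiag g = _root_.blockDiag (fun i => f i + g i) := by
  ext ⟨i, a⟩ ⟨j, b⟩
  by_cases h : i = j <;> simp [bd_apply, h]

lemma bd_sub : _root_.blockDiag f - _root_.blockDiag g = _root_.blockDiag (fun i => f i - g i) := by
  ext ⟨i, a⟩ ⟨j, b⟩
  by_cases h : i = j <;> simp [bd_apply, h]

lemma bd_neg : -_root_.blockDiag f = _root_.blockDiag (fun i => -(f i)) := by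
  ext ⟨i, a⟩ ⟨j, b⟩
  by_cases h : i = j <;> simp [bd_apply, h]

lemma bd_smul (c : ℝ) : c • _root_.blockDiag f = _root_.blockDiag (fun i => c • f i) := by
  ext ⟨i, a⟩ ⟨j, b⟩
  by_cases h : i = j <;> simp [bd_apply, h]

lemma bd_one : _root_.blockDiag (fun _ : Fin N => (1 : Matrix (Fin n) (Fin n) ℝ)) = 1 := by
  ext ⟨i, a⟩ ⟨j, b⟩
  by_cases h : i = j
  · subst h
    by_cases hab : a = b <;> simp [bd_apply, hab, Matrix.one_apply, Prod.ext_iff]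
  · simp [bd_apply, h, Matrix.one_apply, Prod.ext_iff]

lemma bd_smul_one_eq_kron (c : Fin N → ℝ) :
    _root_.blockDiag (fun i => c i • (1 : Matrix (Fin n) (Fin n) ℝ)) =
      Matrix.diagonal c ⊗ₖ (1 : Matrix (Fin n) (Fin n) ℝ) := by
  ext ⟨i, a⟩ ⟨j, b⟩
  by_cases h : i = j
  · subst h; simp [bd_apply, Matrix.diagonal]
  · simp [bd_apply, h, Matrix.diagonal]

lemma bd_congr (h : ∀ i, f i = g i) : _root_.blockDiag f = _root_.blockDiag g := by
  ext ⟨i, a⟩ ⟨j, b⟩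
  by_cases hij : i = j <;> simp [bd_apply, hij, h]

end bd

section pd
variable {m l : Type*} [Fintype m] [Fintype l] [DecidableEq m] [DecidableEq l]

omit [Fintype m] [DecidableEq m] in
lemma real_isHermitian_iff (M : Matrix m m ℝ) : M.IsHermitian ↔ Mᵀ = M := by
  rw [Matrix.IsHermitian, Matrix.conjTranspose_eq_transpose_of_trivial]

lemma posDef_smul {M : Matrix m m ℝ} (hM : M.PosDef) {c : ℝ} (hc : 0 < c) :
    (c • M).PosDef := by
  have hMt : Mᵀ = M := (real_isHermitian_iff M).mp hM.1
  refine Matrix.PosDef.of_dotProduct_mulVec_pos ?_ fun x hx => ?_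
  · rw [real_isHermitian_iff, Matrix.transpose_smul, hMt]
  · rw [Matrix.smul_mulVec, dotProduct_smul, smul_eq_mul]
    exact mul_pos hc (hM.dotProduct_mulVec_pos hx)

lemma posDef_conj {M B : Matrix m m ℝ} (hM : M.PosDef) (hB : B * Bᵀ = 1) :
    (B * M * Bᵀ).PosDef := by
  have hMt : Mᵀ = M := (real_isHermitian_iff M).mp hM.1
  refine Matrix.PosDef.of_dotProduct_mulVec_pos ?_ fun x hx => ?_
  · rw [real_isHermitian_iff]
    simp [Matrix.transpose_mul, hMt, Matrix.mul_assoc]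
  · have key : (star x) ⬝ᵥ (B * M * Bᵀ) *ᵥ x
        = (star (Bᵀ *ᵥ x)) ⬝ᵥ M *ᵥ (Bᵀ *ᵥ x) := by
      simp only [star_trivial, ← Matrix.mulVec_mulVec]
      rw [Matrix.dotProduct_mulVec, ← Matrix.mulVec_transpose]
    rw [key]
    refine hM.dotProduct_mulVec_pos fun h0 => hx ?_
    have : B *ᵥ (Bᵀ *ᵥ x) = B *ᵥ 0 := by rw [h0]
    rwa [Matrix.mulVec_mulVec, hB, Matrix.one_mulVec, Matrix.mulVec_zero] at this

lemma posDef_reindex {M : Matrix m m ℝ} (hM : M.PosDef) (e : l ≃ m) :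
    (Matrix.reindex e.symm e.symm M).PosDef := by
  have hMt : Mᵀ = M := (real_isHermitian_iff M).mp hM.1
  refine Matrix.PosDef.of_dotProduct_mulVec_pos ?_ fun x hx => ?_
  · rw [real_isHermitian_iff]
    simp [Matrix.reindex_apply, Matrix.transpose_submatrix, hMt]
  · have key : (star x) ⬝ᵥ (Matrix.reindex e.symm e.symm M) *ᵥ x
        = (star (x ∘ e.symm)) ⬝ᵥ M *ᵥ (x ∘ e.symm) := by
      simp only [star_trivial, Matrix.reindex_apply, dotProduct, Matrix.mulVec,
        Matrix.submatrix_apply, Function.comp]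
      refine Fintype.sum_equiv e _ _ fun a => ?_
      simp only [Equiv.symm_apply_apply]
      congr 1
      refine Fintype.sum_equiv e _ _ fun b => ?_
      simp
    rw [key]
    refine hM.dotProduct_mulVec_pos fun h0 => hx ?_
    funext a
    have := congrFun h0 (e a)
    simpa using this

lemma posDef_fromBlocks {A : Matrix m m ℝ} {D : Matrix l l ℝ}
    (hA : A.PosDef) (hD : D.PosDef) :
    (Matrix.fromBlocks A 0 0 D).PosDef := by
  have hAt : Aᵀ = A := (real_isHermitian_iff A).mp hA.1
  have hDt : Dᵀ = D := (real_isHermitian_iff D).mp hD.1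
  refine Matrix.PosDef.of_dotProduct_mulVec_pos ?_ fun x hx => ?_
  · rw [real_isHermitian_iff, Matrix.fromBlocks_transpose]
    simp [hAt, hDt]
  · have hxe : x = Sum.elim (x ∘ Sum.inl) (x ∘ Sum.inr) := by
      funext a; cases a <;> rfl
    have hcase : x ∘ Sum.inl ≠ 0 ∨ x ∘ Sum.inr ≠ 0 := by
      by_contra hc
      push_neg at hc
      apply hx
      funext a
      cases a with
      | inl a => exact congrFun hc.1 a
      | inr a => exact congrFun hc.2 a
    rw [hxe, star_trivial, Matrix.fromBlocks_mulVec]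
    simp only [Matrix.zero_mulVec, add_zero, zero_add, sumElim_dotProduct_sumElim,
      Sum.elim_comp_inl, Sum.elim_comp_inr]
    rcases hcase with h | h
    · have h1 := hA.dotProduct_mulVec_pos h
      have h2 := hD.posSemidef.dotProduct_mulVec_nonneg (x ∘ Sum.inr)
      rw [star_trivial] at h1 h2
      linarith
    · have h1 := hA.posSemidef.dotProduct_mulVec_nonneg (x ∘ Sum.inl)
      have h2 := hD.dotProduct_mulVec_pos h
      rw [star_trivial] at h1 h2
      linarith

end pd

lemma posDef_blockDiag {N n : ℕ} {f : Fin N → Matrix (Fin n) (Fin n) ℝ}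
    (hf : ∀ i, (f i).PosDef) :
    (_root_.blockDiag f).PosDef := by
  refine Matrix.PosDef.of_dotProduct_mulVec_pos ?_ fun x hx => ?_
  · rw [real_isHermitian_iff, bd_transpose]
    exact bd_congr _ _ fun i => (real_isHermitian_iff (f i)).mp (hf i).1
  · have key : (star x) ⬝ᵥ (_root_.blockDiag f) *ᵥ x
        = ∑ i, (fun a => x (i, a)) ⬝ᵥ (f i) *ᵥ (fun a => x (i, a)) := by
      simp only [star_trivial, dotProduct, Matrix.mulVec, Fintype.sum_prod_type, bd_apply]
      refine Finset.sum_congr rfl fun i _ => Finset.sum_congr rfl fun a _ => ?_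
      rw [Finset.sum_eq_single i]
      · simp
      · intro k _ hk
        have : i ≠ k := Ne.symm hk
        simp [this]
      · simp
    rw [key]
    obtain ⟨⟨i0, a0⟩, hp⟩ : ∃ p, x p ≠ 0 := by
      by_contra hc; push_neg at hc; exact hx (funext hc)
    refine Finset.sum_pos' (fun i _ => ?_) ⟨i0, Finset.mem_univ _, ?_⟩
    · have := (hf i).posSemidef.dotProduct_mulVec_nonneg (fun a => x (i, a))
      rwa [star_trivial] at this
    · refine (hf i0).dotProduct_mulVec_pos fun h0 => hp ?_
      exact congrFun h0 a0

lemma decompEquiv_apply_lt {v n : ℕ} (h : v ≤ n) (j : Fin n) (hj : (j : ℕ) < v) :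
    decompEquiv v n h j = Sum.inl ⟨j, hj⟩ := by
  have : (finCongr (Nat.add_sub_cancel' h).symm) j = Fin.castAdd (n - v) ⟨j, hj⟩ := by
    ext; simp
  simp only [decompEquiv, Equiv.trans_apply, this]
  exact finSumFinEquiv_symm_apply_castAdd ⟨j, hj⟩

lemma decompEquiv_apply_ge {v n : ℕ} (h : v ≤ n) (j : Fin n) (hj : ¬ (j : ℕ) < v) :
    decompEquiv v n h j = Sum.inr ⟨(j : ℕ) - v, by omega⟩ := by
  have : (finCongr (Nat.add_sub_cancel' h).symm) j =
      Fin.natAdd v ⟨(j : ℕ) - v, by omega⟩ := by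
    ext; simp; omega
  simp only [decompEquiv, Equiv.trans_apply, this]
  exact finSumFinEquiv_symm_apply_natAdd _

lemma diag_if_eq_reindex {v n : ℕ} (h : v ≤ n) (c : ℝ) :
    Matrix.diagonal (fun j : Fin n => if (j : ℕ) < v then c else 0) =
    Matrix.reindex (decompEquiv v n h).symm (decompEquiv v n h).symm
      (Matrix.fromBlocks (c • (1 : Matrix (Fin v) (Fin v) ℝ)) 0 0
        (0 : Matrix (Fin (n - v)) (Fin (n - v)) ℝ)) := by
  have h1 : c • (1 : Matrix (Fin v) (Fin v) ℝ) = Matrix.diagonal (fun _ => c) := by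
    ext i j; by_cases hij : i = j <;> simp [Matrix.diagonal, Matrix.one_apply, hij]
  have h2 : (0 : Matrix (Fin (n - v)) (Fin (n - v)) ℝ) = Matrix.diagonal (fun _ => 0) := by
    simp
  rw [h1, h2, Matrix.fromBlocks_diagonal, Matrix.reindex_apply, Equiv.symm_symm,
    Matrix.submatrix_diagonal_equiv]
  refine congrArg Matrix.diagonal ?_
  funext j
  by_cases hj : (j : ℕ) < v
  · rw [Function.comp_apply, decompEquiv_apply_lt h j hj]; simp [hj]
  · rw [Function.comp_apply, decompEquiv_apply_ge h j hj]; simp [hj]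

lemma submatrix_mul_id {α β γ α' γ' : Type*} [Fintype β] [DecidableEq β]
    (M : Matrix α β ℝ) (N : Matrix β γ ℝ) (f : α' → α) (g : γ' → γ) :
    M.submatrix f id * N.submatrix id g = (M * N).submatrix f g :=
  Matrix.submatrix_mul_equiv M N f (Equiv.refl β) g

set_option maxHeartbeats 1000000 in
lemma block_conj {n p r v : ℕ} (h : v ≤ n)
    (T A : Matrix (Fin n) (Fin n) ℝ) (hT : Tᵀ * T = 1) (hTT : T * Tᵀ = 1)
    (H : Matrix (Fin p) (Fin n) ℝ) (C : Matrix (Fin r) (Fin n) ℝ)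
    (A11 : Matrix (Fin v) (Fin v) ℝ) (A21 : Matrix (Fin (n - v)) (Fin v) ℝ)
    (A22 : Matrix (Fin (n - v)) (Fin (n - v)) ℝ)
    (C1 : Matrix (Fin r) (Fin v) ℝ)
    (H1 : Matrix (Fin p) (Fin v) ℝ) (H2 : Matrix (Fin p) (Fin (n - v)) ℝ)
    (hA : Tᵀ * A * T = (Matrix.fromBlocks A11 0 A21 A22).submatrix (decompEquiv v n h) (decompEquiv v n h))
    (hC : C * T = (Matrix.fromCols C1 0).submatrix id (decompEquiv v n h))
    (hH : H * T = (Matrix.fromCols H1 H2).submatrix id (decompEquiv v n h))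
    (G1 : Matrix (Fin v) (Fin r) ℝ)
    (P1 : Matrix (Fin v) (Fin v) ℝ) (P2 : Matrix (Fin (n - v)) (Fin (n - v)) ℝ)
    (κ ε mi : ℝ) :
    (κ * ε) • (1 : Matrix (Fin n) (Fin n) ℝ)
      - κ • (T * Matrix.diagonal (fun j : Fin n => if (j : ℕ) < v then mi else 0) * Tᵀ)
      - ((A - (T * (Matrix.fromRows G1 0).submatrix (decompEquiv v n h) id) * C)ᵀ *
            (T * (Matrix.fromBlocks P1 0 0 P2).submatrix (decompEquiv v n h) (decompEquiv v n h) * Tᵀ)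
        + (T * (Matrix.fromBlocks P1 0 0 P2).submatrix (decompEquiv v n h) (decompEquiv v n h) * Tᵀ) *
            (A - (T * (Matrix.fromRows G1 0).submatrix (decompEquiv v n h) id) * C)
        + Hᵀ * H)
    = T * ((-(Matrix.fromBlocks
        ((A11 - G1 * C1)ᵀ * P1 + P1 * (A11 - G1 * C1) + H1ᵀ * H1 +
          (κ * (mi - ε)) • (1 : Matrix (Fin v) (Fin v) ℝ))
        (A21ᵀ * P2 + H1ᵀ * H2)
        (P2 * A21 + H2ᵀ * H1)
        (P2 * A22 + A22ᵀ * P2 + H2ᵀ * H2 -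
          (κ * ε) • (1 : Matrix (Fin (n - v)) (Fin (n - v)) ℝ)))).submatrix
          (decompEquiv v n h) (decompEquiv v n h)) * Tᵀ := by
  set d := decompEquiv v n h with hd
  -- conjugation homomorphism facts
  have conj_add : ∀ M M' : Matrix (Fin v ⊕ Fin (n - v)) (Fin v ⊕ Fin (n - v)) ℝ,
      T * M.submatrix d d * Tᵀ + T * M'.submatrix d d * Tᵀ = T * (M + M').submatrix d d * Tᵀ := by
    intro M M'
    simp only [Matrix.submatrix_add, Pi.add_apply, Matrix.mul_add, Matrix.add_mul]
  have conj_sub : ∀ M M' : Matrix (Fin v ⊕ Fin (n - v)) (Fin v ⊕ Fin (n - v)) ℝ,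
      T * M.submatrix d d * Tᵀ - T * M'.submatrix d d * Tᵀ = T * (M - M').submatrix d d * Tᵀ := by
    intro M M'
    simp only [Matrix.submatrix_sub, Pi.sub_apply, Matrix.mul_sub, Matrix.sub_mul]
  have conj_smul : ∀ (c : ℝ) (M : Matrix (Fin v ⊕ Fin (n - v)) (Fin v ⊕ Fin (n - v)) ℝ),
      c • (T * M.submatrix d d * Tᵀ) = T * (c • M).submatrix d d * Tᵀ := by
    intro c M
    simp only [Matrix.submatrix_smul, Pi.smul_apply, Matrix.mul_smul, Matrix.smul_mul]
  have conj_mul : ∀ M M' : Matrix (Fin v ⊕ Fin (n - v)) (Fin v ⊕ Fin (n - v)) ℝ,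
      (T * M.submatrix d d * Tᵀ) * (T * M'.submatrix d d * Tᵀ) = T * (M * M').submatrix d d * Tᵀ := by
    intro M M'
    calc (T * M.submatrix d d * Tᵀ) * (T * M'.submatrix d d * Tᵀ)
        = T * (M.submatrix d d * ((Tᵀ * T) * (M'.submatrix d d * Tᵀ))) := by
          simp only [Matrix.mul_assoc]
      _ = T * (M.submatrix d d * M'.submatrix d d) * Tᵀ := by
          rw [hT, Matrix.one_mul]
          simp only [Matrix.mul_assoc]
      _ = T * (M * M').submatrix d d * Tᵀ := by
          rw [Matrix.submatrix_mul_equiv]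
  have conj_tr : ∀ M : Matrix (Fin v ⊕ Fin (n - v)) (Fin v ⊕ Fin (n - v)) ℝ,
      (T * M.submatrix d d * Tᵀ)ᵀ = T * Mᵀ.submatrix d d * Tᵀ := by
    intro M
    rw [Matrix.transpose_mul, Matrix.transpose_mul, Matrix.transpose_transpose,
      Matrix.transpose_submatrix, Matrix.mul_assoc]
  -- base matrices in conjugated form
  have hAeq : A = T * (Matrix.fromBlocks A11 0 A21 A22).submatrix d d * Tᵀ := by
    rw [← hA]
    simp only [← Matrix.mul_assoc]
    rw [hTT, Matrix.one_mul, Matrix.mul_assoc A, hTT, Matrix.mul_one]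
  have hCeq : C = (Matrix.fromCols C1 0).submatrix id d * Tᵀ := by
    rw [← hC, Matrix.mul_assoc, hTT, Matrix.mul_one]
  have hHeq : H = (Matrix.fromCols H1 H2).submatrix id d * Tᵀ := by
    rw [← hH, Matrix.mul_assoc, hTT, Matrix.mul_one]
  have hGC : (T * (Matrix.fromRows G1 0).submatrix d id) * C
      = T * (Matrix.fromBlocks (G1 * C1) 0 0 0).submatrix d d * Tᵀ := by
    rw [hCeq]
    calc T * (Matrix.fromRows G1 0).submatrix d id * ((Matrix.fromCols C1 0).submatrix id d * Tᵀ)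
        = T * ((Matrix.fromRows G1 0).submatrix d id * (Matrix.fromCols C1 0).submatrix id d) * Tᵀ := by
          simp only [Matrix.mul_assoc]
      _ = T * (Matrix.fromRows G1 0 * Matrix.fromCols C1 0).submatrix d d * Tᵀ := by
          rw [submatrix_mul_id]
      _ = _ := by
          rw [Matrix.fromRows_mul_fromCols]
          simp only [Matrix.mul_zero, Matrix.zero_mul]
  have hHH : Hᵀ * H
      = T * ((Matrix.fromCols H1 H2)ᵀ * Matrix.fromCols H1 H2).submatrix d d * Tᵀ := by
    rw [hHeq, Matrix.transpose_mul, Matrix.transpose_transpose, Matrix.transpose_submatrix]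
    calc T * (Matrix.fromCols H1 H2)ᵀ.submatrix d id * ((Matrix.fromCols H1 H2).submatrix id d * Tᵀ)
        = T * ((Matrix.fromCols H1 H2)ᵀ.submatrix d id * (Matrix.fromCols H1 H2).submatrix id d) * Tᵀ := by
          simp only [Matrix.mul_assoc]
      _ = _ := by rw [submatrix_mul_id]
  have hOne : (1 : Matrix (Fin n) (Fin n) ℝ)
      = T * (1 : Matrix (Fin v ⊕ Fin (n - v)) (Fin v ⊕ Fin (n - v)) ℝ).submatrix d d * Tᵀ := by
    rw [Matrix.submatrix_one_equiv, Matrix.mul_one, hTT]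
  have hMi : T * Matrix.diagonal (fun j : Fin n => if (j : ℕ) < v then mi else 0) * Tᵀ
      = T * (Matrix.fromBlocks (mi • (1 : Matrix (Fin v) (Fin v) ℝ)) 0 0 0).submatrix d d * Tᵀ := by
    rw [diag_if_eq_reindex h mi, Matrix.reindex_apply, Equiv.symm_symm, hd]
  have hX : A - (T * (Matrix.fromRows G1 0).submatrix d id) * C
      = T * (Matrix.fromBlocks A11 0 A21 A22
          - Matrix.fromBlocks (G1 * C1) 0 0 0).submatrix d d * Tᵀ := by
    rw [← conj_sub, ← hGC, ← hAeq]
  rw [hX, hMi, hHH, hOne, conj_tr, conj_mul, conj_mul, conj_smul, conj_smul,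
    conj_add, conj_add, conj_sub, conj_sub]
  congr 1
  congr 1
  apply congrArg (fun M => Matrix.submatrix M (d : Fin n → Fin v ⊕ Fin (n - v)) d)
  ext i j
  cases i with
  | inl a => cases j with
    | inl b =>
        by_cases hab : a = b <;>
          simp [Matrix.fromBlocks_multiply, Matrix.fromBlocks_transpose, Matrix.transpose_fromCols, Matrix.fromRows_mul_fromCols, Matrix.sub_mul,
            Matrix.mul_sub, Matrix.transpose_sub, Matrix.one_apply, hab] <;> ring
    | inr b =>
        simp [Matrix.fromBlocks_multiply, Matrix.fromBlocks_transpose, Matrix.transpose_fromCols, Matrix.fromRows_mul_fromCols, Matrix.sub_mul,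
          Matrix.mul_sub, Matrix.transpose_sub] <;> ring
  | inr a => cases j with
    | inl b =>
        simp [Matrix.fromBlocks_multiply, Matrix.fromBlocks_transpose, Matrix.transpose_fromCols, Matrix.fromRows_mul_fromCols, Matrix.sub_mul,
          Matrix.mul_sub, Matrix.transpose_sub] <;> ring
    | inr b =>
        by_cases hab : a = b <;>
          simp [Matrix.fromBlocks_multiply, Matrix.fromBlocks_transpose, Matrix.transpose_fromCols, Matrix.fromRows_mul_fromCols, Matrix.sub_mul,
            Matrix.mul_sub, Matrix.transpose_sub, Matrix.one_apply, hab] <;> ring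

lemma conj_mulg {n : ℕ} {s : Type*} [Fintype s] [DecidableEq s]
    {T : Matrix (Fin n) (Fin n) ℝ} (hT : Tᵀ * T = 1) (d : Fin n ≃ s)
    (M M' : Matrix s s ℝ) :
    (T * M.submatrix d d * Tᵀ) * (T * M'.submatrix d d * Tᵀ)
      = T * (M * M').submatrix d d * Tᵀ := by
  calc (T * M.submatrix d d * Tᵀ) * (T * M'.submatrix d d * Tᵀ)
      = T * (M.submatrix d d * ((Tᵀ * T) * (M'.submatrix d d * Tᵀ))) := by
        simp only [Matrix.mul_assoc]
    _ = T * (M.submatrix d d * M'.submatrix d d) * Tᵀ := by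
        rw [hT, Matrix.one_mul]
        simp only [Matrix.mul_assoc]
    _ = T * (M * M').submatrix d d * Tᵀ := by rw [Matrix.submatrix_mul_equiv]

lemma conj_trg {n : ℕ} {s : Type*} (T : Matrix (Fin n) (Fin n) ℝ) (d : Fin n ≃ s)
    (M : Matrix s s ℝ) :
    (T * M.submatrix d d * Tᵀ)ᵀ = T * Mᵀ.submatrix d d * Tᵀ := by
  rw [Matrix.transpose_mul, Matrix.transpose_mul, Matrix.transpose_transpose,
    Matrix.transpose_submatrix, Matrix.mul_assoc]

set_option maxHeartbeats 4000000 in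
/-- Lemma 4 of the paper (stability part): if the local LMIs hold, then the block-diagonal
`P = blockdiag(T_i diag(P_{i1},P_{i2}) T_iᵀ) > 0` satisfies
`ĀᵀP + PĀ − (Lᵀ⊗I)F̄ᵀP − PF̄(L⊗I) + I_N ⊗ HᵀH < 0`. -/
theorem stmt_19 {N n p : ℕ} (r : Fin N → ℕ)
    (L : Matrix (Fin N) (Fin N) ℝ) (hL : IsLaplacianOfStronglyConnectedDigraph L)
    (θ : Fin N → ℝ) (hθpos : ∀ i, 0 < θ i) (hθL : Matrix.vecMul θ L = 0)
    (hθsum : ∑ i, θ i = (N : ℝ))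
    (A : Matrix (Fin n) (Fin n) ℝ) (H : Matrix (Fin p) (Fin n) ℝ)
    (C : ∀ i : Fin N, Matrix (Fin (r i)) (Fin n) ℝ)
    (T : Fin N → Matrix (Fin n) (Fin n) ℝ) (hT : ∀ i, (T i)ᵀ * T i = 1)
    (v : Fin N → ℕ) (hv : ∀ i, v i ≤ n)
    (A11 : ∀ i : Fin N, Matrix (Fin (v i)) (Fin (v i)) ℝ)
    (A21 : ∀ i : Fin N, Matrix (Fin (n - v i)) (Fin (v i)) ℝ)
    (A22 : ∀ i : Fin N, Matrix (Fin (n - v i)) (Fin (n - v i)) ℝ)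
    (C1 : ∀ i : Fin N, Matrix (Fin (r i)) (Fin (v i)) ℝ)
    (H1 : ∀ i : Fin N, Matrix (Fin p) (Fin (v i)) ℝ)
    (H2 : ∀ i : Fin N, Matrix (Fin p) (Fin (n - v i)) ℝ)
    (hA : ∀ i, (T i)ᵀ * A * T i =
      Matrix.reindex (decompEquiv (v i) n (hv i)).symm (decompEquiv (v i) n (hv i)).symm
        (Matrix.fromBlocks (A11 i) 0 (A21 i) (A22 i)))
    (hC : ∀ i, C i * T i =
      Matrix.reindex (Equiv.refl (Fin (r i))) (decompEquiv (v i) n (hv i)).symm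
        (Matrix.fromCols (C1 i) 0))
    (hH : ∀ i, H * T i =
      Matrix.reindex (Equiv.refl (Fin p)) (decompEquiv (v i) n (hv i)).symm
        (Matrix.fromCols (H1 i) (H2 i)))
    (m : Fin N → ℝ) (hm : ∀ i, 0 < m i) (ε : ℝ) (hε : 0 < ε)
    (hεbound : ((blockDiag T)ᵀ *
        ((Matrix.diagonal θ * L + Lᵀ * Matrix.diagonal θ) ⊗ₖ (1 : Matrix (Fin n) (Fin n) ℝ)) *
        blockDiag T +
      blockDiag (fun i => Matrix.diagonal (fun j : Fin n => if (j : ℕ) < v i then m i else 0)) -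
      ε • (1 : Matrix (Fin N × Fin n) (Fin N × Fin n) ℝ)).PosDef)
    (G1 : ∀ i : Fin N, Matrix (Fin (v i)) (Fin (r i)) ℝ)
    (κ : ℝ) (hκ : 0 < κ)
    (P1 : ∀ i : Fin N, Matrix (Fin (v i)) (Fin (v i)) ℝ) (hP1 : ∀ i, (P1 i).PosDef)
    (P2 : ∀ i : Fin N, Matrix (Fin (n - v i)) (Fin (n - v i)) ℝ) (hP2 : ∀ i, (P2 i).PosDef)
    (hLMI : ∀ i, NegDef (Matrix.fromBlocks
      ((A11 i - G1 i * C1 i)ᵀ * P1 i + P1 i * (A11 i - G1 i * C1 i) + (H1 i)ᵀ * H1 i +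
        (κ * (m i - ε)) • (1 : Matrix (Fin (v i)) (Fin (v i)) ℝ))
      ((A21 i)ᵀ * P2 i + (H1 i)ᵀ * H2 i)
      (P2 i * A21 i + (H2 i)ᵀ * H1 i)
      (P2 i * A22 i + (A22 i)ᵀ * P2 i + (H2 i)ᵀ * H2 i -
        (κ * ε) • (1 : Matrix (Fin (n - v i)) (Fin (n - v i)) ℝ)))) :
    (blockDiag (fun i => T i *
        Matrix.reindex (decompEquiv (v i) n (hv i)).symm (decompEquiv (v i) n (hv i)).symm
          (Matrix.fromBlocks (P1 i) 0 0 (P2 i)) * (T i)ᵀ)).PosDef ∧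
    NegDef (
      (blockDiag (fun i => A - (T i *
          Matrix.reindex (decompEquiv (v i) n (hv i)).symm (Equiv.refl (Fin (r i)))
            (Matrix.fromRows (G1 i) 0)) * C i))ᵀ *
        blockDiag (fun i => T i *
          Matrix.reindex (decompEquiv (v i) n (hv i)).symm (decompEquiv (v i) n (hv i)).symm
            (Matrix.fromBlocks (P1 i) 0 0 (P2 i)) * (T i)ᵀ) +
      blockDiag (fun i => T i *
          Matrix.reindex (decompEquiv (v i) n (hv i)).symm (decompEquiv (v i) n (hv i)).symm
            (Matrix.fromBlocks (P1 i) 0 0 (P2 i)) * (T i)ᵀ) *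
        blockDiag (fun i => A - (T i *
          Matrix.reindex (decompEquiv (v i) n (hv i)).symm (Equiv.refl (Fin (r i)))
            (Matrix.fromRows (G1 i) 0)) * C i) -
      (Lᵀ ⊗ₖ (1 : Matrix (Fin n) (Fin n) ℝ)) *
        (blockDiag (fun i => (κ * θ i) • (T i *
          Matrix.reindex (decompEquiv (v i) n (hv i)).symm (decompEquiv (v i) n (hv i)).symm
            (Matrix.fromBlocks (P1 i)⁻¹ 0 0 (P2 i)⁻¹) * (T i)ᵀ)))ᵀ *
        blockDiag (fun i => T i *
          Matrix.reindex (decompEquiv (v i) n (hv i)).symm (decompEquiv (v i) n (hv i)).symm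
            (Matrix.fromBlocks (P1 i) 0 0 (P2 i)) * (T i)ᵀ) -
      blockDiag (fun i => T i *
          Matrix.reindex (decompEquiv (v i) n (hv i)).symm (decompEquiv (v i) n (hv i)).symm
            (Matrix.fromBlocks (P1 i) 0 0 (P2 i)) * (T i)ᵀ) *
        blockDiag (fun i => (κ * θ i) • (T i *
          Matrix.reindex (decompEquiv (v i) n (hv i)).symm (decompEquiv (v i) n (hv i)).symm
            (Matrix.fromBlocks (P1 i)⁻¹ 0 0 (P2 i)⁻¹) * (T i)ᵀ)) *
        (L ⊗ₖ (1 : Matrix (Fin n) (Fin n) ℝ)) +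
      blockDiag (fun _ => Hᵀ * H)) := by
  classical
  have hTT : ∀ i, T i * (T i)ᵀ = 1 := fun i => mul_eq_one_comm.mp (hT i)
  have hP1t : ∀ i, (P1 i)ᵀ = P1 i := fun i => (real_isHermitian_iff _).mp (hP1 i).1
  have hP2t : ∀ i, (P2 i)ᵀ = P2 i := fun i => (real_isHermitian_iff _).mp (hP2 i).1
  have hre : ∀ (i : Fin N)
      (M : Matrix (Fin (v i) ⊕ Fin (n - v i)) (Fin (v i) ⊕ Fin (n - v i)) ℝ),
      Matrix.reindex (decompEquiv (v i) n (hv i)).symm (decompEquiv (v i) n (hv i)).symm M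
        = M.submatrix (decompEquiv (v i) n (hv i)) (decompEquiv (v i) n (hv i)) := by
    intro i M
    rw [Matrix.reindex_apply, Equiv.symm_symm]
  have hre2 : ∀ (i : Fin N) (M : Matrix (Fin (v i) ⊕ Fin (n - v i)) (Fin (r i)) ℝ),
      Matrix.reindex (decompEquiv (v i) n (hv i)).symm (Equiv.refl (Fin (r i))) M
        = M.submatrix (decompEquiv (v i) n (hv i)) id := by
    intro i M
    rw [Matrix.reindex_apply, Equiv.symm_symm, Equiv.refl_symm, Equiv.coe_refl]
  constructor
  · exact posDef_blockDiag fun i =>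
      posDef_conj (posDef_reindex (posDef_fromBlocks (hP1 i) (hP2 i)) _) (hTT i)
  · set pf : Fin N → Matrix (Fin n) (Fin n) ℝ := fun i => T i *
        Matrix.reindex (decompEquiv (v i) n (hv i)).symm (decompEquiv (v i) n (hv i)).symm
          (Matrix.fromBlocks (P1 i) 0 0 (P2 i)) * (T i)ᵀ with hpf
    set ff : Fin N → Matrix (Fin n) (Fin n) ℝ := fun i => (κ * θ i) • (T i *
        Matrix.reindex (decompEquiv (v i) n (hv i)).symm (decompEquiv (v i) n (hv i)).symm
          (Matrix.fromBlocks (P1 i)⁻¹ 0 0 (P2 i)⁻¹) * (T i)ᵀ) with hff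
    set af : Fin N → Matrix (Fin n) (Fin n) ℝ := fun i => A - (T i *
        Matrix.reindex (decompEquiv (v i) n (hv i)).symm (Equiv.refl (Fin (r i)))
          (Matrix.fromRows (G1 i) 0)) * C i with haf
    set md : Fin N → Matrix (Fin n) (Fin n) ℝ :=
      fun i => Matrix.diagonal (fun j : Fin n => if (j : ℕ) < v i then m i else 0) with hmd
    have hQPid : ∀ i, Matrix.fromBlocks (P1 i)⁻¹ 0 0 (P2 i)⁻¹ *
        Matrix.fromBlocks (P1 i) 0 0 (P2 i) = 1 := by
      intro i
      rw [Matrix.fromBlocks_multiply,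
        Matrix.nonsing_inv_mul _ (isUnit_iff_ne_zero.mpr (hP1 i).det_pos.ne'),
        Matrix.nonsing_inv_mul _ (isUnit_iff_ne_zero.mpr (hP2 i).det_pos.ne')]
      simpa using Matrix.fromBlocks_one
    have hPQid : ∀ i, Matrix.fromBlocks (P1 i) 0 0 (P2 i) *
        Matrix.fromBlocks (P1 i)⁻¹ 0 0 (P2 i)⁻¹ = 1 := by
      intro i
      rw [Matrix.fromBlocks_multiply,
        Matrix.mul_nonsing_inv _ (isUnit_iff_ne_zero.mpr (hP1 i).det_pos.ne'),
        Matrix.mul_nonsing_inv _ (isUnit_iff_ne_zero.mpr (hP2 i).det_pos.ne')]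
      simpa using Matrix.fromBlocks_one
    have hDκθ : Matrix.diagonal (fun i => κ * θ i) = κ • Matrix.diagonal θ := by
      ext a b
      by_cases hab : a = b <;> simp [Matrix.diagonal, hab]
    have hFP : blockDiag ff * blockDiag pf
        = Matrix.diagonal (fun i => κ * θ i) ⊗ₖ (1 : Matrix (Fin n) (Fin n) ℝ) := by
      rw [bd_mul, ← bd_smul_one_eq_kron]
      refine bd_congr _ _ fun i => ?_
      simp only [hff, hpf]
      rw [Matrix.smul_mul]
      congr 1
      rw [hre i, hre i, conj_mulg (hT i), hQPid i, Matrix.submatrix_one_equiv,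
        Matrix.mul_one, hTT i]
    have hPF : blockDiag pf * blockDiag ff
        = Matrix.diagonal (fun i => κ * θ i) ⊗ₖ (1 : Matrix (Fin n) (Fin n) ℝ) := by
      rw [bd_mul, ← bd_smul_one_eq_kron]
      refine bd_congr _ _ fun i => ?_
      simp only [hff, hpf]
      rw [Matrix.mul_smul]
      congr 1
      rw [hre i, hre i, conj_mulg (hT i), hPQid i, Matrix.submatrix_one_equiv,
        Matrix.mul_one, hTT i]
    have hFT : (blockDiag ff)ᵀ = blockDiag ff := by
      rw [bd_transpose]
      refine bd_congr _ _ fun i => ?_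
      simp only [hff]
      rw [Matrix.transpose_smul]
      congr 1
      rw [hre i, conj_trg, Matrix.fromBlocks_transpose]
      simp [Matrix.transpose_nonsing_inv, hP1t i, hP2t i]
    have e1 : (Lᵀ ⊗ₖ (1 : Matrix (Fin n) (Fin n) ℝ)) * (blockDiag ff)ᵀ * blockDiag pf
        = κ • ((Lᵀ * Matrix.diagonal θ) ⊗ₖ (1 : Matrix (Fin n) (Fin n) ℝ)) := by
      rw [hFT, Matrix.mul_assoc, hFP, ← Matrix.mul_kronecker_mul, Matrix.one_mul, hDκθ,
        Matrix.mul_smul, Matrix.smul_kronecker]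
    have e2 : blockDiag pf * blockDiag ff * (L ⊗ₖ (1 : Matrix (Fin n) (Fin n) ℝ))
        = κ • ((Matrix.diagonal θ * L) ⊗ₖ (1 : Matrix (Fin n) (Fin n) ℝ)) := by
      rw [hPF, ← Matrix.mul_kronecker_mul, Matrix.one_mul, hDκθ,
        Matrix.smul_mul, Matrix.smul_kronecker]
    have hc12 : (Lᵀ ⊗ₖ (1 : Matrix (Fin n) (Fin n) ℝ)) * (blockDiag ff)ᵀ * blockDiag pf
          + blockDiag pf * blockDiag ff * (L ⊗ₖ (1 : Matrix (Fin n) (Fin n) ℝ))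
        = κ • ((Matrix.diagonal θ * L + Lᵀ * Matrix.diagonal θ)
            ⊗ₖ (1 : Matrix (Fin n) (Fin n) ℝ)) := by
      rw [e1, e2, ← smul_add, ← Matrix.add_kronecker, add_comm (Lᵀ * Matrix.diagonal θ)]
    have e3 : (blockDiag af)ᵀ * blockDiag pf + blockDiag pf * blockDiag af
          + blockDiag (fun _ : Fin N => Hᵀ * H)
        = blockDiag (fun i => (af i)ᵀ * pf i + pf i * af i + Hᵀ * H) := by
      rw [bd_transpose, bd_mul, bd_mul, bd_add, bd_add]
    have hBB : blockDiag T * (blockDiag T)ᵀ = 1 := by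
      rw [bd_transpose, bd_mul, bd_congr _ (fun _ => 1) hTT, bd_one]
    have hQ : blockDiag T * ((blockDiag T)ᵀ *
          ((Matrix.diagonal θ * L + Lᵀ * Matrix.diagonal θ) ⊗ₖ (1 : Matrix (Fin n) (Fin n) ℝ)) *
          blockDiag T + blockDiag md -
          ε • (1 : Matrix (Fin N × Fin n) (Fin N × Fin n) ℝ)) * (blockDiag T)ᵀ
        = (Matrix.diagonal θ * L + Lᵀ * Matrix.diagonal θ) ⊗ₖ (1 : Matrix (Fin n) (Fin n) ℝ)
          + blockDiag (fun i => T i * md i * (T i)ᵀ)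
          - ε • (1 : Matrix (Fin N × Fin n) (Fin N × Fin n) ℝ) := by
      rw [Matrix.mul_sub, Matrix.mul_add, Matrix.sub_mul, Matrix.add_mul]
      congr 1
      · congr 1
        · calc blockDiag T * ((blockDiag T)ᵀ *
                ((Matrix.diagonal θ * L + Lᵀ * Matrix.diagonal θ) ⊗ₖ (1 : Matrix (Fin n) (Fin n) ℝ)) *
                blockDiag T) * (blockDiag T)ᵀ
              = (blockDiag T * (blockDiag T)ᵀ) *
                ((Matrix.diagonal θ * L + Lᵀ * Matrix.diagonal θ) ⊗ₖ (1 : Matrix (Fin n) (Fin n) ℝ)) *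
                (blockDiag T * (blockDiag T)ᵀ) := by simp only [Matrix.mul_assoc]
            _ = _ := by rw [hBB, Matrix.one_mul, Matrix.mul_one]
        · rw [bd_transpose, bd_mul, bd_mul]
      · rw [Matrix.mul_smul, Matrix.mul_one, Matrix.smul_mul, hBB]
    have hZ : ∀ i, (κ * ε) • (1 : Matrix (Fin n) (Fin n) ℝ) - κ • (T i * md i * (T i)ᵀ)
          - ((af i)ᵀ * pf i + pf i * af i + Hᵀ * H)
        = T i * ((-(Matrix.fromBlocks
            ((A11 i - G1 i * C1 i)ᵀ * P1 i + P1 i * (A11 i - G1 i * C1 i) + (H1 i)ᵀ * H1 i +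
              (κ * (m i - ε)) • (1 : Matrix (Fin (v i)) (Fin (v i)) ℝ))
            ((A21 i)ᵀ * P2 i + (H1 i)ᵀ * H2 i)
            (P2 i * A21 i + (H2 i)ᵀ * H1 i)
            (P2 i * A22 i + (A22 i)ᵀ * P2 i + (H2 i)ᵀ * H2 i -
              (κ * ε) • (1 : Matrix (Fin (n - v i)) (Fin (n - v i)) ℝ)))).submatrix
              (decompEquiv (v i) n (hv i)) (decompEquiv (v i) n (hv i))) * (T i)ᵀ := by
      intro i
      have hA' := hA i
      rw [hre i] at hA'
      have hC' : C i * T i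
          = (Matrix.fromCols (C1 i) 0).submatrix id (decompEquiv (v i) n (hv i)) := by
        rw [hC i, Matrix.reindex_apply, Equiv.refl_symm, Equiv.coe_refl, Equiv.symm_symm]
      have hH' : H * T i
          = (Matrix.fromCols (H1 i) (H2 i)).submatrix id (decompEquiv (v i) n (hv i)) := by
        rw [hH i, Matrix.reindex_apply, Equiv.refl_symm, Equiv.coe_refl, Equiv.symm_symm]
      have hbc := block_conj (hv i) (T i) A (hT i) (hTT i) H (C i) (A11 i) (A21 i) (A22 i)
        (C1 i) (H1 i) (H2 i) hA' hC' hH' (G1 i) (P1 i) (P2 i) κ ε (m i)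
      simp only [haf, hpf, hmd, hre, hre2]
      exact hbc
    have hZeq : blockDiag (fun i => T i * ((-(Matrix.fromBlocks
            ((A11 i - G1 i * C1 i)ᵀ * P1 i + P1 i * (A11 i - G1 i * C1 i) + (H1 i)ᵀ * H1 i +
              (κ * (m i - ε)) • (1 : Matrix (Fin (v i)) (Fin (v i)) ℝ))
            ((A21 i)ᵀ * P2 i + (H1 i)ᵀ * H2 i)
            (P2 i * A21 i + (H2 i)ᵀ * H1 i)
            (P2 i * A22 i + (A22 i)ᵀ * P2 i + (H2 i)ᵀ * H2 i -
              (κ * ε) • (1 : Matrix (Fin (n - v i)) (Fin (n - v i)) ℝ)))).submatrix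
              (decompEquiv (v i) n (hv i)) (decompEquiv (v i) n (hv i))) * (T i)ᵀ)
        = (κ * ε) • (1 : Matrix (Fin N × Fin n) (Fin N × Fin n) ℝ)
          - κ • blockDiag (fun i => T i * md i * (T i)ᵀ)
          - blockDiag (fun i => (af i)ᵀ * pf i + pf i * af i + Hᵀ * H) := by
      rw [← bd_one, bd_smul, bd_smul, bd_sub, bd_sub]
      exact bd_congr _ _ fun i => (hZ i).symm
    have hmain : -((blockDiag af)ᵀ * blockDiag pf + blockDiag pf * blockDiag af
          - (Lᵀ ⊗ₖ (1 : Matrix (Fin n) (Fin n) ℝ)) * (blockDiag ff)ᵀ * blockDiag pf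
          - blockDiag pf * blockDiag ff * (L ⊗ₖ (1 : Matrix (Fin n) (Fin n) ℝ))
          + blockDiag (fun _ : Fin N => Hᵀ * H))
        = κ • (blockDiag T * ((blockDiag T)ᵀ *
            ((Matrix.diagonal θ * L + Lᵀ * Matrix.diagonal θ) ⊗ₖ (1 : Matrix (Fin n) (Fin n) ℝ)) *
            blockDiag T + blockDiag md -
            ε • (1 : Matrix (Fin N × Fin n) (Fin N × Fin n) ℝ)) * (blockDiag T)ᵀ)
          + blockDiag (fun i => T i * ((-(Matrix.fromBlocks
            ((A11 i - G1 i * C1 i)ᵀ * P1 i + P1 i * (A11 i - G1 i * C1 i) + (H1 i)ᵀ * H1 i +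
              (κ * (m i - ε)) • (1 : Matrix (Fin (v i)) (Fin (v i)) ℝ))
            ((A21 i)ᵀ * P2 i + (H1 i)ᵀ * H2 i)
            (P2 i * A21 i + (H2 i)ᵀ * H1 i)
            (P2 i * A22 i + (A22 i)ᵀ * P2 i + (H2 i)ᵀ * H2 i -
              (κ * ε) • (1 : Matrix (Fin (n - v i)) (Fin (n - v i)) ℝ)))).submatrix
              (decompEquiv (v i) n (hv i)) (decompEquiv (v i) n (hv i))) * (T i)ᵀ) := by
      rw [hZeq, hQ]
      have hstep : (blockDiag af)ᵀ * blockDiag pf + blockDiag pf * blockDiag af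
            - (Lᵀ ⊗ₖ (1 : Matrix (Fin n) (Fin n) ℝ)) * (blockDiag ff)ᵀ * blockDiag pf
            - blockDiag pf * blockDiag ff * (L ⊗ₖ (1 : Matrix (Fin n) (Fin n) ℝ))
            + blockDiag (fun _ : Fin N => Hᵀ * H)
          = blockDiag (fun i => (af i)ᵀ * pf i + pf i * af i + Hᵀ * H)
            - κ • ((Matrix.diagonal θ * L + Lᵀ * Matrix.diagonal θ)
                ⊗ₖ (1 : Matrix (Fin n) (Fin n) ℝ)) := by
        rw [← e3, ← hc12]
        abel
      rw [hstep]
      module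
    unfold NegDef
    rw [hmain]
    refine Matrix.PosDef.add (posDef_smul (posDef_conj hεbound hBB) hκ)
      (posDef_blockDiag fun i => ?_)
    have hli := posDef_reindex (hLMI i) (decompEquiv (v i) n (hv i))
    rw [hre i] at hli
    exact posDef_conj hli (hTT i)
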